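/- If 0 < p ≤ 1 and (N,w) is a p-additive game, then w is convex: for every player i ∈ N and all coalitions S ⊆ T ⊆ N \ {i}, w(S ∪ {i}) − w(S) ≤ w(T ∪ {i}) − w(T). -/

import Mathlib

open Finset

variable {ι : Type*} [DecidableEq ι] [Fintype ι]

/-- The set of players in `S` with positive individual value. -/
noncomputable def Splus (w : Finset ι → ℝ) (S : Finset ι) : Finset ι :=
  S.filter fun i => 0 < w {i}

/-- A TU game `w` (with `w ∅ = 0`) is `p`-additive. -/
def PAdditive (p : ℝ) (w : Finset ι → ℝ) : Prop :=
  w ∅ = 0 ∧ (∀ S, 0 ≤ w S) ∧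
  (∀ S : Finset ι, (∀ i ∈ S, w {i} = 0) → w S = 0) ∧
  ∀ S : Finset ι, (Splus w S).Nonempty → w S ^ p = ∑ i ∈ Splus w S, w {i} ^ p

/-- For `q ≥ 1` and `c ≥ 0`, the map `x ↦ (x+c)^q - x^q` is monotone on `[0,∞)`. -/
lemma rpow_diff_mono {q c : ℝ} (hq : 1 ≤ q) (hc : 0 ≤ c) :
    MonotoneOn (fun x : ℝ => (x + c) ^ q - x ^ q) (Set.Ici 0) := by
  have hdiff : Differentiable ℝ (fun x : ℝ => (x + c) ^ q - x ^ q) := by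
    apply Differentiable.sub
    · exact fun x => ((Real.hasDerivAt_rpow_const (x := x + c) (Or.inr hq)).comp (h := fun y : ℝ => y + c) x
        ((hasDerivAt_id x).add_const c)).differentiableAt
    · exact Real.differentiable_rpow_const hq
  apply monotoneOn_of_deriv_nonneg (convex_Ici 0) hdiff.continuous.continuousOn
    (fun x _ => hdiff.differentiableAt.differentiableWithinAt)
  intro x hx
  rw [interior_Ici] at hx
  have hx0 : (0:ℝ) < x := hx
  have h1 : HasDerivAt (fun x : ℝ => (x + c) ^ q) (q * (x + c) ^ (q - 1) * 1) x := by
    exact (Real.hasDerivAt_rpow_const (x := x + c) (Or.inr hq)).comp x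
      ((hasDerivAt_id x).add_const c)
  have h2 : HasDerivAt (fun x : ℝ => x ^ q) (q * x ^ (q - 1)) x :=
    Real.hasDerivAt_rpow_const (Or.inl hx0.ne')
  have := (h1.sub h2).deriv
  rw [show (fun x : ℝ => (x + c) ^ q - x ^ q) = (fun x => (x + c) ^ q) - (fun x => x ^ q) from rfl,
    this]
  have hle : x ^ (q - 1) ≤ (x + c) ^ (q - 1) :=
    Real.rpow_le_rpow hx0.le (by linarith) (by linarith)
  have hq0 : (0:ℝ) ≤ q := by linarith
  nlinarith [mul_le_mul_of_nonneg_left hle hq0]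

lemma padditive_repr (p : ℝ) (hp0 : 0 < p) (w : Finset ι → ℝ) (hw : PAdditive p w)
    (S : Finset ι) : w S = (∑ i ∈ Splus w S, w {i} ^ p) ^ (1/p) := by
  obtain ⟨-, hnn, hzero, hsum⟩ := hw
  rcases (Splus w S).eq_empty_or_nonempty with h | h
  · have hS0 : w S = 0 := by
      apply hzero
      intro i hi
      by_contra hne
      have : i ∈ Splus w S := mem_filter.mpr ⟨hi, lt_of_le_of_ne (hnn {i}) (Ne.symm hne)⟩
      simp [h] at this
    rw [hS0, h, Finset.sum_empty, Real.zero_rpow (by positivity)]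
  · rw [← hsum S h, one_div, Real.rpow_rpow_inv (hnn S) hp0.ne']

theorem padditive_convex (p : ℝ) (hp0 : 0 < p) (hp1 : p ≤ 1)
    (w : Finset ι → ℝ) (hw : PAdditive p w) :
    ∀ (i : ι) (S T : Finset ι), S ⊆ T → i ∉ T →
      w (insert i S) - w S ≤ w (insert i T) - w T := by
  intro i S T hST hiT
  have hiS : i ∉ S := fun h => hiT (hST h)
  have hnn := hw.2.1
  have hrepr := padditive_repr p hp0 w hw
  -- Splus of insert
  have hins : ∀ U : Finset ι, i ∉ U →
      ∑ j ∈ Splus w (insert i U), w {j} ^ p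
        = (if 0 < w {i} then w {i} ^ p else 0) + ∑ j ∈ Splus w U, w {j} ^ p := by
    intro U hiU
    unfold Splus
    rw [Finset.filter_insert]
    split_ifs with h
    · rw [Finset.sum_insert (by simp [Finset.mem_filter, hiU])]
    · simp
  set A := ∑ j ∈ Splus w S, w {j} ^ p with hA
  set B := ∑ j ∈ Splus w T, w {j} ^ p with hB
  have hA0 : 0 ≤ A := Finset.sum_nonneg fun j hj =>
    Real.rpow_nonneg (hnn {j}) p
  have hAB : A ≤ B := by
    apply Finset.sum_le_sum_of_subset_of_nonneg
    · exact Finset.filter_subset_filter _ hST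
    · exact fun j _ _ => Real.rpow_nonneg (hnn {j}) p
  set c := if 0 < w {i} then w {i} ^ p else 0 with hc
  have hc0 : 0 ≤ c := by
    rw [hc]; split_ifs with h
    · exact Real.rpow_nonneg (hnn {i}) p
    · exact le_refl 0
  have hq : 1 ≤ 1/p := one_le_one_div hp0 hp1
  have key := rpow_diff_mono hq hc0 (Set.mem_Ici.mpr hA0)
    (Set.mem_Ici.mpr (hA0.trans hAB)) hAB
  simp only at key
  calc w (insert i S) - w S = (A + c) ^ (1/p) - A ^ (1/p) := by
        rw [hrepr (insert i S), hrepr S, hins S hiS, ← hA, add_comm]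
    _ ≤ (B + c) ^ (1/p) - B ^ (1/p) := key
    _ = w (insert i T) - w T := by
        rw [hrepr (insert i T), hrepr T, hins T hiT, ← hB, add_comm]
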